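/- Let n, m, k be positive integers with 2m ≥ n+1, and let (α_i)_{i=0}^{k+m} be nonnegative reals with ∑_{i=0}^{k+m} α_i (i+1) = 2(k+m+2). Define a_i = (\frac{i+1}{2(k+m+2)} - \frac{i}{n} - \frac{1}{n+1}) / (\frac{1}{2} - \frac{k+m+1}{n} - \frac{1}{n+1}). Then ∑_{i=0}^{k+m} α_i a_i ≤ 2 - 4/((k+m+1)·(2(k+m+1)(n+1) - n(n-1))) < 2. -/

import Mathlib

open Finset

/-- Key combinatorial exponent computation: the total interpolation exponent
∑ αᵢ aᵢ is at most 2 - 4/((k+m+1)(2(k+m+1)(n+1) - n(n-1))) < 2. -/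
theorem exponent_sum_lt_two (n m k : ℕ) (hn : 0 < n) (hm : 0 < m) (hk : 0 < k)
    (hmn : 2 * m ≥ n + 1)
    (α : ℕ → ℝ) (hα : ∀ i, 0 ≤ α i)
    (hsum : ∑ i ∈ range (k + m + 1), α i * ((i : ℝ) + 1) = 2 * ((k : ℝ) + m + 2)) :
    (∑ i ∈ range (k + m + 1), α i *
        ((((i : ℝ) + 1) / (2 * ((k : ℝ) + m + 2)) - (i : ℝ) / n - 1 / ((n : ℝ) + 1)) /
          (1 / 2 - ((k : ℝ) + m + 1) / n - 1 / ((n : ℝ) + 1))))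
      ≤ 2 - 4 / (((k : ℝ) + m + 1) * (2 * ((k : ℝ) + m + 1) * ((n : ℝ) + 1) - n * ((n : ℝ) - 1)))
    ∧ 2 - 4 / (((k : ℝ) + m + 1) * (2 * ((k : ℝ) + m + 1) * ((n : ℝ) + 1) - n * ((n : ℝ) - 1)))
        < 2 := by
  have hk1 : (1:ℝ) ≤ k := by exact_mod_cast hk
  have hm1 : (1:ℝ) ≤ m := by exact_mod_cast hm
  have hn1 : (1:ℝ) ≤ n := by exact_mod_cast hn
  have hmn' : (n:ℝ) + 1 ≤ 2 * m := by exact_mod_cast hmn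
  set N : ℝ := (n:ℝ) with hNdef
  set K : ℝ := (k:ℝ) + m + 1 with hKdef
  have hNpos : 0 < N := by linarith
  have hN1 : 0 < N + 1 := by linarith
  have hKpos : 0 < K := by rw [hKdef]; linarith
  have h2K : N + 5 ≤ 2 * K := by rw [hKdef]; linarith
  have hD : 1/2 - K/N - 1/(N+1) < 0 := by
    have h1 : 1/2 < K/N := by
      rw [div_lt_div_iff₀ (by norm_num) hNpos]; nlinarith
    have h2 : 0 < 1/(N+1) := by positivity
    linarith
  have hM : 0 < 2*K*(N+1) - N*(N-1) := by nlinarith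
  set S : ℝ := ∑ i ∈ range (k+m+1), α i with hSdef
  have hSnn : 0 ≤ S := Finset.sum_nonneg fun i _ => hα i
  -- S ≥ 2(K+1)/K
  have hS : 2 * (K + 1) ≤ K * S := by
    have hterm : ∀ i ∈ range (k+m+1), α i * ((i:ℝ)+1) ≤ K * α i := by
      intro i hi
      have hle : (i:ℝ) + 1 ≤ K := by
        have : i ≤ k + m := Nat.lt_succ_iff.mp (Finset.mem_range.mp hi)
        have : (i:ℝ) ≤ (k:ℝ) + m := by exact_mod_cast this
        rw [hKdef]; linarith
      calc α i * ((i:ℝ)+1) ≤ α i * K := mul_le_mul_of_nonneg_left hle (hα i)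
        _ = K * α i := mul_comm _ _
    calc 2 * (K + 1) = ∑ i ∈ range (k+m+1), α i * ((i:ℝ)+1) := by
            rw [hsum]; rw [hKdef]; ring
      _ ≤ ∑ i ∈ range (k+m+1), K * α i := Finset.sum_le_sum hterm
      _ = K * S := by rw [hSdef, Finset.mul_sum]
    -- done
  have hS' : 2 * (K + 1) / K ≤ S := (div_le_iff₀' hKpos).mpr hS
  have hc2 : 0 < 1/N - 1/(N+1) := by
    rw [sub_pos, div_lt_div_iff₀ hN1 hNpos]; linarith
  -- rewrite LHS
  have hkey : ∀ i ∈ range (k+m+1),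
      α i * ((((i : ℝ) + 1) / (2 * ((k : ℝ) + m + 2)) - (i : ℝ) / N - 1 / (N + 1)) /
          (1 / 2 - K / N - 1 / (N + 1)))
      = ((1/(2*(K+1)) - 1/N) * (α i * ((i:ℝ)+1)) + (1/N - 1/(N+1)) * α i) /
          (1 / 2 - K / N - 1 / (N + 1)) := by
    intro i _
    have : (k : ℝ) + m + 2 = K + 1 := by rw [hKdef]; ring
    rw [this]; ring
  rw [Finset.sum_congr rfl hkey, ← Finset.sum_div, Finset.sum_add_distrib,
    ← Finset.mul_sum, ← Finset.mul_sum, hsum, ← hSdef]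
  have hKM : ((k:ℝ) + m + 1) * (2 * ((k:ℝ) + m + 1) * (N + 1) - N * (N - 1))
      = K * (2*K*(N+1) - N*(N-1)) := by rw [hKdef]
  rw [hKM]
  have hKMpos : 0 < K * (2*K*(N+1) - N*(N-1)) := mul_pos hKpos hM
  constructor
  · rw [div_le_iff_of_neg hD]
    have hk2 : (k:ℝ) + m + 2 = K + 1 := by rw [hKdef]; ring
    rw [hk2]
    have hid : (2 - 4 / (K * (2*K*(N+1) - N*(N-1)))) * (1 / 2 - K / N - 1 / (N + 1))
        = (1/(2*(K+1)) - 1/N) * (2 * (K + 1)) + (1/N - 1/(N+1)) * (2 * (K + 1) / K) := by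
      have hK1 : K + 1 ≠ 0 := by positivity
      have hN0 : N ≠ 0 := ne_of_gt hNpos
      have hN10 : N + 1 ≠ 0 := ne_of_gt hN1
      have hK0 : K ≠ 0 := ne_of_gt hKpos
      have hM0 : 2*K*(N+1) - N*(N-1) ≠ 0 := ne_of_gt hM
      field_simp
      ring
    have hmono : (1/N - 1/(N+1)) * (2 * (K + 1) / K) ≤ (1/N - 1/(N+1)) * S :=
      mul_le_mul_of_nonneg_left hS' (le_of_lt hc2)
    linarith
  · have : 0 < 4 / (K * (2*K*(N+1) - N*(N-1))) := by positivity
    linarith
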